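/- Let α : ℤ×ℤ → ℂ be antisymmetric (α(m,n) = −α(n,m)) and sl(2,ℂ)-invariant in the sense that (i−m)·α(i+m, n) + (i−n)·α(m, i+n) = 0 for all i ∈ {−1, 0, 1} and all m, n ∈ ℤ. Then there exists c ∈ ℂ such that α(m,n) = c·(m³−m) whenever m+n = 0 and α(m,n) = 0 whenever m+n ≠ 0; i.e. every sl(2,ℂ)-invariant antisymmetric bilinear form on the Witt algebra is a scalar multiple of the Gelfand–Fuchs cocycle. -/
import Mathlib


/-- Every antisymmetric `sl(2,ℂ)`-invariant bilinear form on the Witt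
algebra is a scalar multiple of the Gelfand–Fuchs cocycle `(m³−m)·δ_{m+n,0}`. -/
theorem stmt13 (α : ℤ → ℤ → ℂ)
    (hanti : ∀ m n : ℤ, α m n = -α n m)
    (hinv : ∀ i ∈ ({-1, 0, 1} : Set ℤ), ∀ m n : ℤ,
      ((i - m : ℤ) : ℂ) * α (i + m) n + ((i - n : ℤ) : ℂ) * α m (i + n) = 0) :
    ∃ c : ℂ, ∀ m n : ℤ,
      (m + n = 0 → α m n = c * (((m : ℂ)) ^ 3 - (m : ℂ))) ∧
      (m + n ≠ 0 → α m n = 0) := by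
  set f : ℤ → ℂ := fun m => α m (-m) with hf
  -- off-diagonal vanishing from i = 0
  have hzero : ∀ m n : ℤ, m + n ≠ 0 → α m n = 0 := by
    intro m n h
    have h0 := hinv 0 (by simp) m n
    simp only [zero_add] at h0
    have hmn : ((m + n : ℤ) : ℂ) ≠ 0 := by exact_mod_cast h
    have hz : ((m + n : ℤ) : ℂ) * α m n = 0 := by
      push_cast at h0 ⊢
      linear_combination -h0
    exact (mul_eq_zero.mp hz).resolve_left hmn
  -- recurrence from i = 1
  have hrec : ∀ m : ℤ, (1 - (m : ℂ)) * f (m + 1) + ((m : ℂ) + 2) * f m = 0 := by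
    intro m
    have h1 := hinv 1 (by simp) m (-1 - m)
    have e1 : (1 : ℤ) + m = m + 1 := by ring
    have e2 : (1 : ℤ) + (-1 - m) = -m := by ring
    have e3 : (-1 - m : ℤ) = -(m + 1) := by ring
    rw [e1, e2, e3] at h1
    push_cast at h1
    simp only [hf]
    linear_combination h1
  have hodd : ∀ m : ℤ, f (-m) = -f m := by
    intro m
    simp only [hf, neg_neg]
    exact hanti (-m) m
  have hf0 : f 0 = 0 := by
    simp only [hf, neg_zero]
    linear_combination (hanti 0 0) / 2
  have hf1 : f 1 = 0 := by
    have h := hrec 0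
    push_cast at h
    rw [hf0] at h
    linear_combination h
  set c : ℂ := f 2 / 6 with hc
  have hf2 : f 2 = c * 6 := by rw [hc]; ring
  -- positive values by induction
  have hnat : ∀ k : ℕ, f k = c * ((k : ℂ) ^ 3 - k) := by
    intro k
    induction k with
    | zero => simpa using hf0
    | succ n ih =>
      match n, ih with
      | 0, _ => simpa using hf1
      | 1, _ =>
        push_cast
        rw [hf2]
        norm_num
      | (m + 2), ih =>
        have h := hrec (m + 2)
        have hne : (1 : ℂ) - ((m : ℂ) + 2) ≠ 0 := by
          intro hcon
          have h' : ((m + 1 : ℕ) : ℂ) = 0 := by push_cast; linear_combination -hcon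
          have : m + 1 = 0 := by exact_mod_cast h'
          omega
        push_cast at h ih ⊢
        have key : (1 - ((m : ℂ) + 2)) * (f ((m : ℤ) + 2 + 1) - c * (((m : ℂ) + 2 + 1) ^ 3 - ((m : ℂ) + 2 + 1))) = 0 := by
          linear_combination h - ((m : ℂ) + 4) * ih
        have := (mul_eq_zero.mp key).resolve_left hne
        linear_combination this
  refine ⟨c, fun m n => ⟨?_, hzero m n⟩⟩
  intro hmn
  have hn : n = -m := by omega
  subst hn
  show f m = c * ((m : ℂ) ^ 3 - (m : ℂ))
  rcases le_or_gt 0 m with hm | hm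
  · obtain ⟨k, rfl⟩ := Int.eq_ofNat_of_zero_le hm
    have := hnat k
    push_cast at this ⊢
    exact this
  · obtain ⟨k, rfl⟩ : ∃ k : ℕ, m = -(k : ℤ) := ⟨m.natAbs, by omega⟩
    have := hnat k
    rw [hodd k, this]
    push_cast
    ring
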